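/- For every fixed real q > 1, each of the functions B_1(q,d_o,d_u) = −(1/(q−1))·(1−d_o^{1−q})·(2−d_o^{1−q}−d_u^{1−q}), B_{21}(q,d_o,d_u) = −(1/(q−1))·(11 + d_u^{3−3q} + 6d_o^{2−2q} + 3d_o^{1−q}d_u^{1−q} − 6d_u^{1−q} − 15d_o^{1−q}), B_{22}(q,d_o,d_u) = −(1/(q−1))·(10 + d_o^{1−q}d_u^{3−3q} + 5d_o^{2−2q} + 2d_o^{1−q}d_u^{1−q} − 5d_u^{1−q} − 13d_o^{1−q}) and B_3(q,d_o,d_u) = −(1/(q−1))·(6 + d_o^{1−q}d_u^{2−2q} + 3d_o^{2−2q} + d_o^{1−q}d_u^{1−q} − 3d_u^{1−q} − 8d_o^{1−q}), viewed as real functions of d_o and d_u on [2,∞) × [2,∞), is monotonically decreasing in d_o (for each fixed d_u ≥ 2) and monotonically decreasing in d_u (for each fixed d_o ≥ 2). -/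
import Mathlib


/-- The bound `B_1(q,d_o,d_u)`. -/
noncomputable def B1 (q dO dU : ℝ) : ℝ :=
  -(1 / (q - 1)) * (1 - dO ^ (1 - q)) * (2 - dO ^ (1 - q) - dU ^ (1 - q))

/-- The bound `B_{21}(q,d_o,d_u)`. -/
noncomputable def B21 (q dO dU : ℝ) : ℝ :=
  -(1 / (q - 1)) * (11 + dU ^ (3 - 3 * q) + 6 * dO ^ (2 - 2 * q)
    + 3 * dO ^ (1 - q) * dU ^ (1 - q) - 6 * dU ^ (1 - q) - 15 * dO ^ (1 - q))

/-- The bound `B_{22}(q,d_o,d_u)`. -/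
noncomputable def B22 (q dO dU : ℝ) : ℝ :=
  -(1 / (q - 1)) * (10 + dO ^ (1 - q) * dU ^ (3 - 3 * q) + 5 * dO ^ (2 - 2 * q)
    + 2 * dO ^ (1 - q) * dU ^ (1 - q) - 5 * dU ^ (1 - q) - 13 * dO ^ (1 - q))

/-- The bound `B_3(q,d_o,d_u)`. -/
noncomputable def B3 (q dO dU : ℝ) : ℝ :=
  -(1 / (q - 1)) * (6 + dO ^ (1 - q) * dU ^ (2 - 2 * q) + 3 * dO ^ (2 - 2 * q)
    + dO ^ (1 - q) * dU ^ (1 - q) - 3 * dU ^ (1 - q) - 8 * dO ^ (1 - q))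

lemma aux_pos (q x : ℝ) (hx : (2:ℝ) ≤ x) : 0 < x ^ (1 - q) :=
  Real.rpow_pos_of_pos (by linarith) _

lemma aux_lt1 (q x : ℝ) (hq : 1 < q) (hx : (2:ℝ) ≤ x) : x ^ (1 - q) < 1 :=
  Real.rpow_lt_one_of_one_lt_of_neg (by linarith) (by linarith)

lemma aux_anti (q x y : ℝ) (hq : 1 < q) (hx : (2:ℝ) ≤ x) (hxy : x ≤ y) :
    y ^ (1 - q) ≤ x ^ (1 - q) :=
  Real.rpow_le_rpow_of_nonpos (by linarith) hxy (by linarith)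

lemma aux_sq (q x : ℝ) (hx : (2:ℝ) ≤ x) : x ^ (2 - 2*q) = (x ^ (1 - q)) ^ 2 := by
  rw [show (2 - 2*q) = (1 - q) * 2 by ring, Real.rpow_mul (by linarith)]
  rw [show ((2:ℝ)) = ((2:ℕ):ℝ) by norm_num, Real.rpow_natCast]

lemma aux_cube (q x : ℝ) (hx : (2:ℝ) ≤ x) : x ^ (3 - 3*q) = (x ^ (1 - q)) ^ 3 := by
  rw [show (3 - 3*q) = (1 - q) * 3 by ring, Real.rpow_mul (by linarith)]
  rw [show ((3:ℝ)) = ((3:ℕ):ℝ) by norm_num, Real.rpow_natCast]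

/-- For every fixed `q > 1`, each of the functions `B_1`, `B_{21}`, `B_{22}` and
`B_3`, viewed as real functions of `d_o` and `d_u` on `[2,∞) × [2,∞)`, is
monotonically decreasing in `d_o` for each fixed `d_u ≥ 2`, and monotonically
decreasing in `d_u` for each fixed `d_o ≥ 2`. -/
theorem bounds_antitone (q : ℝ) (hq : 1 < q) :
    (∀ dU ∈ Set.Ici (2 : ℝ), AntitoneOn (fun dO => B1 q dO dU) (Set.Ici 2)) ∧
    (∀ dO ∈ Set.Ici (2 : ℝ), AntitoneOn (fun dU => B1 q dO dU) (Set.Ici 2)) ∧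
    (∀ dU ∈ Set.Ici (2 : ℝ), AntitoneOn (fun dO => B21 q dO dU) (Set.Ici 2)) ∧
    (∀ dO ∈ Set.Ici (2 : ℝ), AntitoneOn (fun dU => B21 q dO dU) (Set.Ici 2)) ∧
    (∀ dU ∈ Set.Ici (2 : ℝ), AntitoneOn (fun dO => B22 q dO dU) (Set.Ici 2)) ∧
    (∀ dO ∈ Set.Ici (2 : ℝ), AntitoneOn (fun dU => B22 q dO dU) (Set.Ici 2)) ∧
    (∀ dU ∈ Set.Ici (2 : ℝ), AntitoneOn (fun dO => B3 q dO dU) (Set.Ici 2)) ∧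
    (∀ dO ∈ Set.Ici (2 : ℝ), AntitoneOn (fun dU => B3 q dO dU) (Set.Ici 2)) := by
  have hc : (0:ℝ) < 1 / (q - 1) := one_div_pos.2 (by linarith)
  refine ⟨?_, ?_, ?_, ?_, ?_, ?_, ?_, ?_⟩
  -- B1 in dO
  · intro dU hdU a ha b hb hab
    simp only [B1]
    have ht0 := aux_pos q dU hdU; have ht1 := aux_lt1 q dU hq hdU
    have ha0 := aux_pos q a ha; have ha1 := aux_lt1 q a hq ha
    have hb0 := aux_pos q b (le_trans ha hab); have hb1 := aux_lt1 q b hq (le_trans ha hab)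
    have hba := aux_anti q a b hq ha hab
    set s := a ^ (1 - q); set s' := b ^ (1 - q); set t := dU ^ (1 - q)
    have hF : (1 - s) * (2 - s - t) ≤ (1 - s') * (2 - s' - t) := by
      nlinarith [mul_nonneg (sub_nonneg.2 hba) (by linarith : (0:ℝ) ≤ 3 - s - s' - t)]
    linarith [mul_le_mul_of_nonneg_left hF hc.le]
  -- B1 in dU
  · intro dO hdO a ha b hb hab
    simp only [B1]
    have hs0 := aux_pos q dO hdO; have hs1 := aux_lt1 q dO hq hdO
    have hba := aux_anti q a b hq ha hab
    set s := dO ^ (1 - q); set t := a ^ (1 - q); set t' := b ^ (1 - q)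
    have hF : (1 - s) * (2 - s - t) ≤ (1 - s) * (2 - s - t') := by
      nlinarith [mul_nonneg (sub_nonneg.2 hba) (by linarith : (0:ℝ) ≤ 1 - s)]
    linarith [mul_le_mul_of_nonneg_left hF hc.le]
  -- B21 in dO
  · intro dU hdU a ha b hb hab
    simp only [B21, aux_cube q dU hdU, aux_sq q a ha, aux_sq q b (le_trans ha hab)]
    have ht0 := aux_pos q dU hdU; have ht1 := aux_lt1 q dU hq hdU
    have ha0 := aux_pos q a ha; have ha1 := aux_lt1 q a hq ha
    have hb0 := aux_pos q b (le_trans ha hab); have hb1 := aux_lt1 q b hq (le_trans ha hab)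
    have hba := aux_anti q a b hq ha hab
    set s := a ^ (1 - q); set s' := b ^ (1 - q); set t := dU ^ (1 - q)
    have hF : 11 + t^3 + 6*s^2 + 3*s*t - 6*t - 15*s
        ≤ 11 + t^3 + 6*s'^2 + 3*s'*t - 6*t - 15*s' := by
      nlinarith [mul_nonneg (sub_nonneg.2 hba) (by linarith : (0:ℝ) ≤ 15 - 6*(s+s') - 3*t)]
    linarith [mul_le_mul_of_nonneg_left hF hc.le]
  -- B21 in dU
  · intro dO hdO a ha b hb hab
    simp only [B21, aux_cube q a ha, aux_cube q b (le_trans ha hab)]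
    have hs0 := aux_pos q dO hdO; have hs1 := aux_lt1 q dO hq hdO
    have ha0 := aux_pos q a ha; have ha1 := aux_lt1 q a hq ha
    have hb0 := aux_pos q b (le_trans ha hab); have hb1 := aux_lt1 q b hq (le_trans ha hab)
    have hba := aux_anti q a b hq ha hab
    set s := dO ^ (1 - q); set t := a ^ (1 - q); set t' := b ^ (1 - q)
    have hF : 11 + t^3 + 6*s^2 + 3*s*t - 6*t - 15*s
        ≤ 11 + t'^3 + 6*s^2 + 3*s*t' - 6*t' - 15*s := by
      nlinarith [mul_nonneg (sub_nonneg.2 hba)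
        (by nlinarith : (0:ℝ) ≤ 6 - (t'^2 + t'*t + t^2) - 3*s)]
    linarith [mul_le_mul_of_nonneg_left hF hc.le]
  -- B22 in dO
  · intro dU hdU a ha b hb hab
    simp only [B22, aux_cube q dU hdU, aux_sq q a ha, aux_sq q b (le_trans ha hab)]
    have ht0 := aux_pos q dU hdU; have ht1 := aux_lt1 q dU hq hdU
    have ha0 := aux_pos q a ha; have ha1 := aux_lt1 q a hq ha
    have hb0 := aux_pos q b (le_trans ha hab); have hb1 := aux_lt1 q b hq (le_trans ha hab)
    have hba := aux_anti q a b hq ha hab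
    set s := a ^ (1 - q); set s' := b ^ (1 - q); set t := dU ^ (1 - q)
    have hF : 10 + s*t^3 + 5*s^2 + 2*s*t - 5*t - 13*s
        ≤ 10 + s'*t^3 + 5*s'^2 + 2*s'*t - 5*t - 13*s' := by
      have h3 : t^3 < 1 := pow_lt_one₀ ht0.le ht1 (by norm_num)
      nlinarith [mul_nonneg (sub_nonneg.2 hba)
        (by nlinarith : (0:ℝ) ≤ 13 - t^3 - 5*(s+s') - 2*t)]
    linarith [mul_le_mul_of_nonneg_left hF hc.le]
  -- B22 in dU
  · intro dO hdO a ha b hb hab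
    simp only [B22, aux_cube q a ha, aux_cube q b (le_trans ha hab)]
    have hs0 := aux_pos q dO hdO; have hs1 := aux_lt1 q dO hq hdO
    have ha0 := aux_pos q a ha; have ha1 := aux_lt1 q a hq ha
    have hb0 := aux_pos q b (le_trans ha hab); have hb1 := aux_lt1 q b hq (le_trans ha hab)
    have hba := aux_anti q a b hq ha hab
    set s := dO ^ (1 - q); set t := a ^ (1 - q); set t' := b ^ (1 - q)
    have hF : 10 + s*t^3 + 5*s^2 + 2*s*t - 5*t - 13*s
        ≤ 10 + s*t'^3 + 5*s^2 + 2*s*t' - 5*t' - 13*s := by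
      have h1 : t^2 < 1 := pow_lt_one₀ ha0.le ha1 (by norm_num)
      have h2 : t'^2 < 1 := pow_lt_one₀ hb0.le hb1 (by norm_num)
      have h3 : t'*t < 1 := by nlinarith
      nlinarith [mul_nonneg (sub_nonneg.2 hba)
        (by nlinarith : (0:ℝ) ≤ 5 - s*(t'^2 + t'*t + t^2) - 2*s)]
    linarith [mul_le_mul_of_nonneg_left hF hc.le]
  -- B3 in dO
  · intro dU hdU a ha b hb hab
    simp only [B3, aux_sq q dU hdU, aux_sq q a ha, aux_sq q b (le_trans ha hab)]
    have ht0 := aux_pos q dU hdU; have ht1 := aux_lt1 q dU hq hdU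
    have ha0 := aux_pos q a ha; have ha1 := aux_lt1 q a hq ha
    have hb0 := aux_pos q b (le_trans ha hab); have hb1 := aux_lt1 q b hq (le_trans ha hab)
    have hba := aux_anti q a b hq ha hab
    set s := a ^ (1 - q); set s' := b ^ (1 - q); set t := dU ^ (1 - q)
    have hF : 6 + s*t^2 + 3*s^2 + s*t - 3*t - 8*s
        ≤ 6 + s'*t^2 + 3*s'^2 + s'*t - 3*t - 8*s' := by
      nlinarith [mul_nonneg (sub_nonneg.2 hba)
        (by nlinarith : (0:ℝ) ≤ 8 - t^2 - 3*(s+s') - t)]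
    linarith [mul_le_mul_of_nonneg_left hF hc.le]
  -- B3 in dU
  · intro dO hdO a ha b hb hab
    simp only [B3, aux_sq q a ha, aux_sq q b (le_trans ha hab)]
    have hs0 := aux_pos q dO hdO; have hs1 := aux_lt1 q dO hq hdO
    have ha0 := aux_pos q a ha; have ha1 := aux_lt1 q a hq ha
    have hb0 := aux_pos q b (le_trans ha hab); have hb1 := aux_lt1 q b hq (le_trans ha hab)
    have hba := aux_anti q a b hq ha hab
    set s := dO ^ (1 - q); set t := a ^ (1 - q); set t' := b ^ (1 - q)
    have hF : 6 + s*t^2 + 3*s^2 + s*t - 3*t - 8*s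
        ≤ 6 + s*t'^2 + 3*s^2 + s*t' - 3*t' - 8*s := by
      nlinarith [mul_nonneg (sub_nonneg.2 hba)
        (by nlinarith : (0:ℝ) ≤ 3 - s*(t'+t) - s)]
    linarith [mul_le_mul_of_nonneg_left hF hc.le]
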